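/- Comparison principle for the Hamilton-Jacobi system on a graph: Let $\mathcal{G}$ be a directed graph on nodes $\{1,\dots,N\}$ with neighborhoods $\mathcal{V}(i)$, let $m:[0,T] \to \mathcal{P}_N$ be continuous, and for each $i$ let $\mathcal{H}(i,\cdot,m)$ be continuous and nondecreasing in each coordinate of $p \in \mathbb{R}^{\mathcal{V}(i)}$. Suppose $u, v : [0,T] \to \mathbb{R}^N$ are $C^1$ and satisfy, for all $i$ and $t$, $-u'(t,i) - \mathcal{H}(i, (u(t,j)-u(t,i))_{j \in \mathcal{V}(i)}, m(t)) \le 0$ and $-v'(t,i) - \mathcal{H}(i, (v(t,j)-v(t,i))_{j \in \mathcal{V}(i)}, m(t)) \ge 0$, with $u(T,i) \le g(i, m(T)) \le v(T,i)$ for all $i$. Then $u(t,i) \le v(t,i)$ for all $t \in [0,T]$ and all $i$. -/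

import Mathlib

open Set

/-- Comparison principle for the Hamilton-Jacobi system on a directed graph:
a `C¹` subsolution `u` lies below a `C¹` supersolution `v` provided the terminal
conditions are ordered and each Hamiltonian is nondecreasing coordinatewise in `p`. -/
theorem graph_HJ_comparison (N : ℕ) (T : ℝ) (hT : 0 ≤ T)
    (V : Fin N → Finset (Fin N))
    (H : (i : Fin N) → ({j // j ∈ V i} → ℝ) → (Fin N → ℝ) → ℝ)
    (g : Fin N → (Fin N → ℝ) → ℝ)
    (m : ℝ → Fin N → ℝ)
    (hm_simplex : ∀ t ∈ Icc (0 : ℝ) T, m t ∈ stdSimplex ℝ (Fin N))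
    (hm_cont : ContinuousOn m (Icc 0 T))
    (hH_cont : ∀ i, Continuous (fun pm : ({j // j ∈ V i} → ℝ) × (Fin N → ℝ) => H i pm.1 pm.2))
    (hH_mono : ∀ i μ, ∀ p q : {j // j ∈ V i} → ℝ, (∀ j, p j ≤ q j) → H i p μ ≤ H i q μ)
    (u v u' v' : ℝ → Fin N → ℝ)
    (hu : ∀ i, ∀ t ∈ Icc (0 : ℝ) T, HasDerivAt (fun s => u s i) (u' t i) t)
    (hv : ∀ i, ∀ t ∈ Icc (0 : ℝ) T, HasDerivAt (fun s => v s i) (v' t i) t)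
    (hu_sub : ∀ i, ∀ t ∈ Icc (0 : ℝ) T,
      -u' t i - H i (fun j => u t j.1 - u t i) (m t) ≤ 0)
    (hv_super : ∀ i, ∀ t ∈ Icc (0 : ℝ) T,
      0 ≤ -v' t i - H i (fun j => v t j.1 - v t i) (m t))
    (hu_T : ∀ i, u T i ≤ g i (m T))
    (hv_T : ∀ i, g i (m T) ≤ v T i) :
    ∀ t ∈ Icc (0 : ℝ) T, ∀ i, u t i ≤ v t i := by
  intro t ht i
  have hNe : (Finset.univ : Finset (Fin N)).Nonempty := ⟨i, Finset.mem_univ i⟩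
  have hu_cont : ∀ j, ContinuousOn (fun s => u s j) (Icc (0:ℝ) T) :=
    fun j s hs => (hu j s hs).continuousAt.continuousWithinAt
  have hv_cont : ∀ j, ContinuousOn (fun s => v s j) (Icc (0:ℝ) T) :=
    fun j s hs => (hv j s hs).continuousAt.continuousWithinAt
  have key : ∀ ε : ℝ, 0 < ε → u t i - v t i ≤ ε * (T - t) := by
    intro ε hε
    set M : ℝ → ℝ := fun s => Finset.univ.sup' hNe (fun j => u s j - v s j) with hM
    set F : ℝ → ℝ := fun s => M s + ε * s with hF
    have hFeq : ∀ s, F s = M s + ε * s := fun s => rfl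
    have hM_cont : ContinuousOn M (Icc (0:ℝ) T) :=
      ContinuousOn.finset_sup'_apply hNe (fun j _ => (hu_cont j).sub (hv_cont j))
    have hF_cont : ContinuousOn F (Icc (0:ℝ) T) :=
      hM_cont.add ((continuous_const.mul continuous_id).continuousOn)
    obtain ⟨t₀, ht₀, hmax⟩ :=
      isCompact_Icc.exists_isMaxOn (nonempty_Icc.2 hT) hF_cont
    have hMT : M T ≤ 0 := by
      refine Finset.sup'_le _ _ fun j _ => ?_
      have := (hu_T j).trans (hv_T j); linarith
    have hFt₀ : F t₀ ≤ ε * T := by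
      rcases eq_or_lt_of_le ht₀.2 with h | h
      · subst h
        rw [hFeq]
        linarith
      · by_contra hcon
        push_neg at hcon
        obtain ⟨i₀, -, hi₀⟩ := Finset.exists_mem_eq_sup' hNe (fun j => u t₀ j - v t₀ j)
        have hi₀' : M t₀ = u t₀ i₀ - v t₀ i₀ := hi₀
        set f : ℝ → ℝ := fun s => u s i₀ - v s i₀ + ε * s with hf
        have hfeq : ∀ s, f s = u s i₀ - v s i₀ + ε * s := fun s => rfl
        have hmaxf : IsMaxOn f (Icc (0:ℝ) T) t₀ := by
          intro s hs
          have h1 : u s i₀ - v s i₀ ≤ M s :=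
            Finset.le_sup' (fun j => u s j - v s j) (Finset.mem_univ i₀)
          have h2 : F s ≤ F t₀ := hmax hs
          rw [hFeq, hFeq] at h2
          show f s ≤ f t₀
          rw [hfeq, hfeq]
          linarith
        have hderiv : HasDerivAt f (u' t₀ i₀ - v' t₀ i₀ + ε * 1) t₀ :=
          (((hu i₀ t₀ ht₀).sub (hv i₀ t₀ ht₀)).add ((hasDerivAt_id t₀).const_mul ε))
        have hcone : (T - t₀) ∈ posTangentConeAt (Icc (0:ℝ) T) t₀ := by
          apply mem_posTangentConeAt_of_segment_subset
          rw [add_sub_cancel]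
          exact (convex_Icc (0:ℝ) T).segment_subset ht₀ (right_mem_Icc.2 hT)
        have hnonpos :=
          hmaxf.localize.hasFDerivWithinAt_nonpos hderiv.hasFDerivAt.hasFDerivWithinAt hcone
        simp only [ContinuousLinearMap.smulRight_apply, ContinuousLinearMap.one_apply,
          ContinuousLinearMap.toSpanSingleton_apply, smul_eq_mul] at hnonpos
        have hvu : v' t₀ i₀ ≤ u' t₀ i₀ := by
          have h1 := hu_sub i₀ t₀ ht₀
          have h2 := hv_super i₀ t₀ ht₀
          have h3 : H i₀ (fun j => u t₀ j.1 - u t₀ i₀) (m t₀)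
              ≤ H i₀ (fun j => v t₀ j.1 - v t₀ i₀) (m t₀) := by
            refine hH_mono i₀ (m t₀) _ _ fun j => ?_
            have h4 : u t₀ j.1 - v t₀ j.1 ≤ M t₀ :=
              Finset.le_sup' (fun k => u t₀ k - v t₀ k) (Finset.mem_univ j.1)
            rw [hi₀'] at h4
            linarith
          linarith
        have hfpos : 0 < u' t₀ i₀ - v' t₀ i₀ + ε * 1 := by linarith
        have := mul_pos (sub_pos.2 h) hfpos
        linarith
    have h5 : u t i - v t i ≤ M t :=
      Finset.le_sup' (fun j => u t j - v t j) (Finset.mem_univ i)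
    have h6 : F t ≤ F t₀ := hmax ht
    rw [hFeq] at h6
    linarith
  rcases eq_or_lt_of_le ht.2 with h | h
  · have := key 1 one_pos; rw [h] at this ⊢; linarith
  · by_contra hcon
    push_neg at hcon
    have hpos : 0 < u t i - v t i := by linarith
    have hTt : (0:ℝ) < T - t := by linarith
    have hkey := key ((u t i - v t i) / (2 * (T - t))) (div_pos hpos (by linarith))
    have heq : (u t i - v t i) / (2 * (T - t)) * (T - t) = (u t i - v t i) / 2 := by
      field_simp
    rw [heq] at hkey
    linarith
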